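/- Let P be a locally finite ranked poset with a special matching M, and let u, v ∈ P with u ≤ v. If M(v) ⋖ v (M(v) is covered by v) and M(u) ⋖ u, then M(u) ≤ M(v). -/

import Mathlib

section Aux

variable {P : Type*} [PartialOrder P] [LocallyFiniteOrder P]

private lemma exists_covBy_aux' {u v : P} (h : u < v) : ∃ w, u ≤ w ∧ w ⋖ v := by
  obtain ⟨w, hw, hmax⟩ := Finset.exists_maximal (s := Finset.Ico u v)
    ⟨u, Finset.mem_Ico.2 ⟨le_rfl, h⟩⟩
  rw [Finset.mem_Ico] at hw
  refine ⟨w, hw.1, hw.2, fun {x} hwx hxv => ?_⟩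
  exact lt_irrefl _ (hwx.trans_le (hmax (Finset.mem_Ico.2 ⟨hw.1.trans hwx.le, hxv⟩) hwx.le))

private lemma rank_lt_aux' (ρ : P → ℕ) (hρ : ∀ x y : P, x ⋖ y → ρ y = ρ x + 1) :
    ∀ n : ℕ, ∀ u v : P, (Finset.Icc u v).card ≤ n → u < v → ρ u < ρ v := by
  intro n
  induction n with
  | zero =>
    intro u v hc h
    have : u ∈ Finset.Icc u v := Finset.mem_Icc.2 ⟨le_rfl, h.le⟩
    have := Finset.card_pos.2 ⟨u, this⟩
    omega
  | succ n ih =>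
    intro u v hc h
    obtain ⟨w, huw, hwv⟩ := exists_covBy_aux' h
    rw [hρ w v hwv]
    rcases eq_or_lt_of_le huw with rfl | hlt
    · omega
    · have hsub : Finset.Icc u w ⊂ Finset.Icc u v := by
        constructor
        · intro x hx
          rw [Finset.mem_Icc] at *
          exact ⟨hx.1, hx.2.trans hwv.le⟩
        · intro hcon
          have hv : v ∈ Finset.Icc u v := Finset.mem_Icc.2 ⟨h.le, le_rfl⟩
          have := Finset.mem_Icc.1 (hcon hv)
          exact lt_irrefl _ (hwv.lt.trans_le this.2)
      have hcard := Finset.card_lt_card hsub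
      have := ih u w (by omega) hlt
      omega

private lemma rank_mono_aux' (ρ : P → ℕ) (hρ : ∀ x y : P, x ⋖ y → ρ y = ρ x + 1)
    {a b : P} (h : a ≤ b) : ρ a ≤ ρ b := by
  rcases h.lt_or_eq with h | rfl
  · exact (rank_lt_aux' ρ hρ _ a b le_rfl h).le
  · exact le_rfl

private lemma lifting_main (ρ : P → ℕ) (hρ : ∀ x y : P, x ⋖ y → ρ y = ρ x + 1)
    (M : P → P) (hinv : Function.Involutive M)
    (hmatch : ∀ v : P, M v ⋖ v ∨ v ⋖ M v)
    (hspecial : ∀ u v : P, u ⋖ v → M u ≠ v → M u ≤ M v) :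
    ∀ n : ℕ, ∀ v : P, ρ v = n → ∀ u : P, u ≤ v → M v ⋖ v →
      (M u ⋖ u → M u ≤ M v) ∧ (u ⋖ M u → M u ≤ v) := by
  intro n
  induction n using Nat.strong_induction_on with
  | _ n ih =>
  intro v hn u huv hMv
  rcases eq_or_lt_of_le huv with rfl | hlt
  · exact ⟨fun _ => le_rfl, fun hu => absurd (hu.lt.trans hMv.lt) (lt_irrefl u)⟩
  obtain ⟨w, huw, hwv⟩ := exists_covBy_aux' hlt
  have hρw : ρ w + 1 = n := by rw [← hn, hρ w v hwv]
  rcases hmatch w with hMw | hMw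
  · -- Case A : M w ⋖ w
    have hne : M w ≠ v := fun hcon => by subst hcon; exact lt_asymm hMw.lt hwv.lt
    have hMwMv : M w ≤ M v := hspecial w v hwv hne
    obtain ⟨P1, P2⟩ := ih (ρ w) (by omega) w rfl u huw hMw
    exact ⟨fun h => (P1 h).trans hMwMv, fun h => (P2 h).trans hwv.le⟩
  · -- Case B : w ⋖ M w ; show M w = v
    have hMweq : M w = v := by
      by_contra hne
      have hle := hspecial w v hwv hne
      have h1 : ρ (M w) = ρ w + 1 := hρ w (M w) hMw
      have h2 : ρ v = ρ (M v) + 1 := hρ (M v) v hMv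
      have h3 := rank_mono_aux' ρ hρ hle
      omega
    have hwMv : w = M v := by rw [← hMweq, hinv w]
    constructor
    · intro hMu
      exact hMu.le.trans (huw.trans (le_of_eq hwMv))
    · intro hu
      rcases eq_or_lt_of_le huw with rfl | hlt2
      · rw [hMweq]
      · rw [hwMv] at hlt2
        obtain ⟨w', huw', hw'Mv⟩ := exists_covBy_aux' hlt2
        have hρMv : ρ v = ρ (M v) + 1 := hρ (M v) v hMv
        have hρw' : ρ (M v) = ρ w' + 1 := hρ w' (M v) hw'Mv
        rcases hmatch w' with hMw' | hMw'
        · obtain ⟨_, P2⟩ := ih (ρ w') (by omega) w' rfl u huw' hMw'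
          exact (P2 hu).trans (hw'Mv.le.trans hMv.le)
        · -- w' ⋖ M w'
          have hne' : M w' ≠ M v := by
            intro hcon
            have : w' = v := by rw [← hinv w', hcon, hinv]
            subst this
            exact lt_asymm hw'Mv.lt hMv.lt
          have hMw'v : M w' ≤ v := by
            have := hspecial w' (M v) hw'Mv hne'
            rwa [hinv v] at this
          have htop : M (M w') ⋖ M w' := by rw [hinv w']; exact hMw'
          have hρMw' : ρ (M w') = ρ w' + 1 := hρ w' (M w') hMw'
          obtain ⟨_, P2⟩ := ih (ρ (M w')) (by omega) (M w') rfl u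
            (huw'.trans hMw'.lt.le) htop
          exact (P2 hu).trans hMw'v
end Aux

/-- Lifting property for special matchings of a locally finite ranked poset.
`P` is a locally finite graded poset with minimum and rank function `ρ`;
`M` is a matching of the Hasse diagram of `P` (an involution matching each
element with one covering it or covered by it), and `M` is special:
`u ⋖ v` and `M u ≠ v` imply `M u ≤ M v`. -/
theorem lifting_property {P : Type*} [PartialOrder P] [LocallyFiniteOrder P] [OrderBot P]
    (ρ : P → ℕ) (hρ_bot : ρ ⊥ = 0) (hρ : ∀ x y : P, x ⋖ y → ρ y = ρ x + 1)
    (M : P → P) (hinv : Function.Involutive M)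
    (hmatch : ∀ v : P, M v ⋖ v ∨ v ⋖ M v)
    (hspecial : ∀ u v : P, u ⋖ v → M u ≠ v → M u ≤ M v)
    (u v : P) (huv : u ≤ v)
    (hMv : M v ⋖ v) (hMu : M u ⋖ u) : M u ≤ M v :=
  (lifting_main ρ hρ M hinv hmatch hspecial (ρ v) v rfl u huv hMv).1 hMu
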